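/- arXiv:2205.14317 — 3 statements merged into one kernel-verified Lean document; each statement's English description precedes it below -/
import Mathlib

section
/- Let w, v ∈ ℝⁿ, let x, x' ∈ [0,1]ⁿ with x'ᵢ ≤ xᵢ for all i, let c, c' ≥ 0 with c' ≤ c, and let Δ* > 0 and ρk, ηk, xk ∈ ℝ with xk ≥ 0. Suppose b_{x,w} + Δ*·(b_{x,v} + c) < |ρk| - Δ*·(|ηk| + xk). Then for the descendant pattern x': |⟨x', w⟩| + Δ*·(|⟨x', v⟩| + c') < |ρk| - Δ*·(|ηk| + xk), so the inclusion equation at step size Δ* has no solution for x' (the subtree rooted at x can be pruned). -/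
open Finset

noncomputable def bnd (n : ℕ) (x w : Fin n → ℝ) : ℝ :=
  max (∑ i ∈ Finset.univ.filter (fun i => 0 < w i), |w i| * x i)
      (∑ i ∈ Finset.univ.filter (fun i => w i < 0), |w i| * x i)

lemma abs_sum_le_bnd (n : ℕ) (w x x' : Fin n → ℝ)
    (hx' : ∀ i, 0 ≤ x' i) (hmono : ∀ i, x' i ≤ x i) :
    |∑ i, x' i * w i| ≤ bnd n x w := by
  rw [abs_le]
  constructor
  · -- lower bound: -bnd ≤ ∑
    have h1 : -(∑ i ∈ Finset.univ.filter (fun i => w i < 0), |w i| * x i)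
        ≤ ∑ i ∈ Finset.univ.filter (fun i => w i < 0), x' i * w i := by
      rw [neg_le, ← Finset.sum_neg_distrib]
      apply Finset.sum_le_sum
      intro i hi
      have hwi : w i < 0 := (Finset.mem_filter.mp hi).2
      rw [abs_of_neg hwi]
      nlinarith [hx' i, hmono i]
    have h2 : ∑ i ∈ Finset.univ.filter (fun i => w i < 0), x' i * w i
        ≤ ∑ i, x' i * w i := by
      apply Finset.sum_le_sum_of_subset_of_nonneg (Finset.filter_subset _ _)
      intro i _ hi
      have : ¬ w i < 0 := by simpa using hi
      nlinarith [hx' i]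
    have : -(∑ i ∈ Finset.univ.filter (fun i => w i < 0), |w i| * x i)
        ≤ ∑ i, x' i * w i := le_trans h1 h2
    calc -bnd n x w ≤ -(∑ i ∈ Finset.univ.filter (fun i => w i < 0), |w i| * x i) := by
          apply neg_le_neg; exact le_max_right _ _
      _ ≤ ∑ i, x' i * w i := this
  · -- upper bound
    have h2 : ∑ i, x' i * w i ≤ ∑ i ∈ Finset.univ.filter (fun i => 0 < w i), x' i * w i := by
      rw [← Finset.sum_filter_add_sum_filter_not Finset.univ (fun i => 0 < w i)
        (fun i => x' i * w i)]
      have : ∑ i ∈ Finset.univ.filter (fun i => ¬ 0 < w i), x' i * w i ≤ 0 := by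
        apply Finset.sum_nonpos
        intro i hi
        have : ¬ 0 < w i := (Finset.mem_filter.mp hi).2
        nlinarith [hx' i]
      linarith
    have h1 : ∑ i ∈ Finset.univ.filter (fun i => 0 < w i), x' i * w i
        ≤ ∑ i ∈ Finset.univ.filter (fun i => 0 < w i), |w i| * x i := by
      apply Finset.sum_le_sum
      intro i hi
      have hwi : 0 < w i := (Finset.mem_filter.mp hi).2
      rw [abs_of_pos hwi]
      nlinarith [hx' i, hmono i]
    calc ∑ i, x' i * w i ≤ _ := h2
      _ ≤ _ := h1
      _ ≤ bnd n x w := le_max_left _ _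

theorem pruning_descendant (n : ℕ) (w v x x' : Fin n → ℝ)
    (hx : ∀ i, 0 ≤ x i ∧ x i ≤ 1) (hx' : ∀ i, 0 ≤ x' i ∧ x' i ≤ 1)
    (hmono : ∀ i, x' i ≤ x i)
    (c c' : ℝ) (hc : 0 ≤ c') (hcc : c' ≤ c)
    (Δ ρk ηk xk : ℝ) (hΔ : 0 < Δ) (hxk : 0 ≤ xk)
    (hprune : bnd n x w + Δ * (bnd n x v + c) < |ρk| - Δ * (|ηk| + xk)) :
    |∑ i, x' i * w i| + Δ * (|∑ i, x' i * v i| + c') < |ρk| - Δ * (|ηk| + xk) := by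
  have hw := abs_sum_le_bnd n w x x' (fun i => (hx' i).1) hmono
  have hv := abs_sum_le_bnd n v x x' (fun i => (hx' i).1) hmono
  nlinarith
end

section
/- Fix λ > 0, a design matrix X ∈ ℝ^{(n+1)×p} whose last row is x_{n+1}, and an active set A ⊆ {1,…,p} such that X_Aᵀ X_A is invertible. Suppose for all τ in an interval [τ₁, τ₂) the LASSO solution β(τ) with augmented response y(τ) has support exactly A with constant signs s_A. Then β_A(τ) = β_A(τ₁) + (τ − τ₁)·ν_A where ν_A = (X_Aᵀ X_A)^{-1} x_{n+1,A}; in particular τ ↦ β(τ) is affine on [τ₁, τ₂). -/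
open Matrix

/-- Augmented response vector: first `n` coordinates are `y₀`, last is `τ`. -/
noncomputable def yAug (n : ℕ) (y0 : Fin n → ℝ) (τ : ℝ) : Fin (n + 1) → ℝ :=
  fun i => if h : (i : ℕ) < n then y0 ⟨i, h⟩ else τ

theorem tau_path_piecewise_linear (n q : ℕ)
    (XA : Matrix (Fin (n + 1)) (Fin q) ℝ) (lam : ℝ) (hlam : 0 < lam)
    (sA : Fin q → ℝ) (y0 : Fin n → ℝ) (βA : ℝ → Fin q → ℝ)
    (τ₁ τ₂ : ℝ) (hτ : τ₁ < τ₂)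
    (hinv : IsUnit (XAᵀ * XA))
    (hkkt : ∀ τ ∈ Set.Ico τ₁ τ₂,
      (XAᵀ * XA).mulVec (βA τ) = XAᵀ.mulVec (yAug n y0 τ) - lam • sA) :
    ∀ τ ∈ Set.Ico τ₁ τ₂,
      βA τ = βA τ₁ + (τ - τ₁) • (XAᵀ * XA)⁻¹.mulVec (fun j => XA (Fin.last n) j) := by
  intro τ hτmem
  set M := XAᵀ * XA with hM
  have hdet : IsUnit M.det := (Matrix.isUnit_iff_isUnit_det M).mp hinv
  have hMinv : M⁻¹ * M = 1 := Matrix.nonsing_inv_mul M hdet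
  have h1 := hkkt τ hτmem
  have h2 := hkkt τ₁ ⟨le_refl τ₁, hτ⟩
  -- difference of KKT equations
  have hdiff : M.mulVec (βA τ - βA τ₁)
      = (τ - τ₁) • (fun j => XA (Fin.last n) j) := by
    have hsub : M.mulVec (βA τ - βA τ₁)
        = XAᵀ.mulVec (yAug n y0 τ) - XAᵀ.mulVec (yAug n y0 τ₁) := by
      rw [Matrix.mulVec_sub, h1, h2]
      abel
    rw [hsub]
    funext j
    simp only [Matrix.mulVec, dotProduct, Pi.sub_apply, Pi.smul_apply,
      smul_eq_mul, Matrix.transpose_apply]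
    rw [← Finset.sum_sub_distrib]
    have : ∀ i : Fin (n + 1),
        XA i j * yAug n y0 τ i - XA i j * yAug n y0 τ₁ i
          = if i = Fin.last n then (τ - τ₁) * XA (Fin.last n) j else 0 := by
      intro i
      by_cases hi : (i : ℕ) < n
      · have : i ≠ Fin.last n := by
          intro h; rw [h] at hi; simp [Fin.last] at hi
        simp [yAug, hi, this]
      · have hieq : i = Fin.last n := by
          have h2 := i.isLt
          exact Fin.ext (by simp [Fin.val_last]; omega)
        subst hieq
        simp [yAug]
        ring
    rw [Finset.sum_congr rfl (fun i _ => this i)]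
    simp
  have key : βA τ - βA τ₁ = (τ - τ₁) • M⁻¹.mulVec (fun j => XA (Fin.last n) j) := by
    calc βA τ - βA τ₁ = (M⁻¹ * M).mulVec (βA τ - βA τ₁) := by
          rw [hMinv, Matrix.one_mulVec]
      _ = M⁻¹.mulVec (M.mulVec (βA τ - βA τ₁)) := by
          rw [← Matrix.mulVec_mulVec]
      _ = (τ - τ₁) • M⁻¹.mulVec (fun j => XA (Fin.last n) j) := by
          rw [hdiff, Matrix.mulVec_smul]
  funext j
  have hj := congrFun key j
  simp only [Pi.sub_apply, Pi.add_apply, Pi.smul_apply, smul_eq_mul] at hj ⊢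
  linarith
end

section
/- Let Δ* > 0 be such that Δ* = min over previously examined patterns j of Δ_j², and suppose the pruning inequality b_{ℓ,w} + Δ*·(b_{ℓ,v} + x_{n+1,ℓ}) < |ρk| − Δ*·(|ηk| + x_{n+1,k}) holds at pattern ℓ. Then for every descendant ℓ' ⊃ ℓ in the pattern tree, the inclusion step size satisfies Δ_{ℓ'}² > Δ*. (Proof by contradiction: assuming Δ_{ℓ'}² < Δ* together with the pruning inequality and the monotonicity bounds b_{ℓ',w} ≤ b_{ℓ,w}, b_{ℓ',v} ≤ b_{ℓ,v}, x_{n+1,ℓ'} ≤ x_{n+1,ℓ} yields that ℓ' is infeasible as an inclusion event.) -/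
open Finset

lemma sum_le_bnd (n : ℕ) (w x x' : Fin n → ℝ)
    (h0 : ∀ i, 0 ≤ x' i) (h1 : ∀ i, x' i ≤ x i) :
    |∑ i, x' i * w i| ≤ bnd n x w := by
  have hx0 : ∀ i, 0 ≤ x i := fun i => le_trans (h0 i) (h1 i)
  rw [abs_le]
  constructor
  · have hsplit := Finset.sum_filter_add_sum_filter_not Finset.univ
      (fun i => w i < 0) (fun i => x' i * w i)
    have h2 : ∑ i ∈ Finset.univ.filter (fun i => w i < 0), x i * w i
        ≤ ∑ i ∈ Finset.univ.filter (fun i => w i < 0), x' i * w i := by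
      apply Finset.sum_le_sum
      intro i hi
      simp only [Finset.mem_filter] at hi
      exact mul_le_mul_of_nonpos_right (h1 i) (le_of_lt hi.2)
    have h3 : (0:ℝ) ≤ ∑ i ∈ Finset.univ.filter (fun i => ¬ w i < 0), x' i * w i := by
      apply Finset.sum_nonneg
      intro i hi
      simp only [Finset.mem_filter] at hi
      exact mul_nonneg (h0 i) (not_lt.mp hi.2)
    have h4 : ∑ i ∈ Finset.univ.filter (fun i => w i < 0), x i * w i
        = -(∑ i ∈ Finset.univ.filter (fun i => w i < 0), |w i| * x i) := by
      rw [← Finset.sum_neg_distrib]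
      apply Finset.sum_congr rfl
      intro i hi
      simp only [Finset.mem_filter] at hi
      rw [abs_of_neg hi.2]; ring
    have h5 : ∑ i ∈ Finset.univ.filter (fun i => w i < 0), |w i| * x i ≤ bnd n x w :=
      le_max_right _ _
    linarith
  · have hsplit := Finset.sum_filter_add_sum_filter_not Finset.univ
      (fun i => 0 < w i) (fun i => x' i * w i)
    have h2 : ∑ i ∈ Finset.univ.filter (fun i => 0 < w i), x' i * w i
        ≤ ∑ i ∈ Finset.univ.filter (fun i => 0 < w i), x i * w i := by
      apply Finset.sum_le_sum
      intro i hi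
      simp only [Finset.mem_filter] at hi
      exact mul_le_mul_of_nonneg_right (h1 i) (le_of_lt hi.2)
    have h3 : ∑ i ∈ Finset.univ.filter (fun i => ¬ 0 < w i), x' i * w i ≤ 0 := by
      apply Finset.sum_nonpos
      intro i hi
      simp only [Finset.mem_filter] at hi
      exact mul_nonpos_of_nonneg_of_nonpos (h0 i) (not_lt.mp hi.2)
    have h4 : ∑ i ∈ Finset.univ.filter (fun i => 0 < w i), x i * w i
        = ∑ i ∈ Finset.univ.filter (fun i => 0 < w i), |w i| * x i := by
      apply Finset.sum_congr rfl
      intro i hi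
      simp only [Finset.mem_filter] at hi
      rw [abs_of_pos hi.2]; ring
    have h5 : ∑ i ∈ Finset.univ.filter (fun i => 0 < w i), |w i| * x i ≤ bnd n x w :=
      le_max_left _ _
    linarith

/-- Lemma 1 (tree pruning of the τ-path): under the pruning inequality at pattern `x`,
any positive step size `Δ'` at which a descendant pattern `x'` satisfies the inclusion
equation must exceed the current minimum step size `Δ*`. -/
theorem pruning_step_size (n : ℕ) (w v x x' : Fin n → ℝ)
    (hx : ∀ i, x i = 0 ∨ x i = 1) (hx' : ∀ i, x' i = 0 ∨ x' i = 1)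
    (hmono : ∀ i, x' i ≤ x i)
    (c c' : ℝ) (hc : 0 ≤ c') (hcc : c' ≤ c)
    (Δstar ρk ηk xk : ℝ) (hΔ : 0 < Δstar) (hxk : 0 ≤ xk)
    (hprune : bnd n x w + Δstar * (bnd n x v + c) < |ρk| - Δstar * (|ηk| + xk))
    (Δ' : ℝ) (hΔ' : 0 < Δ')
    (hincl : |(∑ i, x' i * w i) - Δ' * ((∑ i, x' i * v i) - c')| =
             |ρk - Δ' * (ηk - xk)|) :
    Δ' > Δstar := by
  by_contra h
  push_neg at h
  have h0 : ∀ i, 0 ≤ x' i := by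
    intro i; rcases hx' i with h | h <;> rw [h] <;> norm_num
  have hw := sum_le_bnd n w x x' h0 hmono
  have hv := sum_le_bnd n v x x' h0 hmono
  set A := ∑ i, x' i * w i
  set B := ∑ i, x' i * v i
  -- upper bound for LHS
  have hub : |A - Δ' * (B - c')| ≤ |A| + Δ' * (|B| + c') := by
    calc |A - Δ' * (B - c')| ≤ |A| + |Δ' * (B - c')| := abs_sub _ _
    _ = |A| + Δ' * |B - c'| := by rw [abs_mul, abs_of_pos hΔ']
    _ ≤ |A| + Δ' * (|B| + c') := by
        have : |B - c'| ≤ |B| + c' := by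
          calc |B - c'| ≤ |B| + |c'| := abs_sub _ _
          _ = |B| + c' := by rw [abs_of_nonneg hc]
        nlinarith
  -- lower bound for RHS
  have hlb : |ρk| - Δ' * (|ηk| + xk) ≤ |ρk - Δ' * (ηk - xk)| := by
    have h1 : |ρk| - |Δ' * (ηk - xk)| ≤ |ρk - Δ' * (ηk - xk)| :=
      abs_sub_abs_le_abs_sub _ _
    have h2 : |Δ' * (ηk - xk)| ≤ Δ' * (|ηk| + xk) := by
      rw [abs_mul, abs_of_pos hΔ']
      have : |ηk - xk| ≤ |ηk| + xk := by
        calc |ηk - xk| ≤ |ηk| + |xk| := abs_sub _ _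
        _ = |ηk| + xk := by rw [abs_of_nonneg hxk]
      nlinarith
    linarith
  have hBnn : 0 ≤ |B| + c' := by positivity
  have hηnn : 0 ≤ |ηk| + xk := by positivity
  nlinarith [mul_le_mul_of_nonneg_right h hBnn, mul_le_mul_of_nonneg_right h hηnn]
end
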